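/- Let K be a field, B = B_0 ⊕ B_1 a finite-dimensional superalgebra with bases {u_1,…,u_r} of B_0 and {v_1,…,v_s} of B_1, and K[X;Y] the free supercommutative algebra on even variables x_j^{(i)} and odd variables y_j^{(i)}. Define generic elements ξ_i = Σ_j u_j ⊗ x_j^{(i)} + Σ_j v_j ⊗ y_j^{(i)} ∈ B ⊗ K[X;Y]. Then the subalgebra K[ξ_1, ξ_2, …] generated by all ξ_i is isomorphic to the relatively free algebra F(G(B)) of the variety generated by the Grassmann envelope G(B) = G_0 ⊗ B_0 + G_1 ⊗ B_1; that is, the kernel of the homomorphism K⟨t_1,t_2,…⟩ → B ⊗ K[X;Y], t_i ↦ ξ_i, equals the T-ideal T(G(B)). -/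

import Mathlib

open scoped TensorProduct

noncomputable section

/-- The free supercommutative algebra `K[X;Y]` on even variables `x_j^{(i)}`
(`i ∈ ℕ`, `1 ≤ j ≤ r`) and odd variables `y_j^{(i)}` (`i ∈ ℕ`, `1 ≤ j ≤ s`), realized as the
tensor product of the polynomial algebra on the even variables with the Grassmann (exterior)
algebra on the odd variables. -/
abbrev SuperComm (K : Type*) [Field K] (r s : ℕ) : Type _ :=
  MvPolynomial (ℕ × Fin r) K ⊗[K] ExteriorAlgebra K ((ℕ × Fin s) → K)

/-- The even variable `x_j^{(i)}` of `K[X;Y]`. -/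
def xgen (K : Type*) [Field K] (r s : ℕ) (i : ℕ) (j : Fin r) : SuperComm K r s :=
  MvPolynomial.X (i, j) ⊗ₜ 1

/-- The odd variable `y_j^{(i)}` of `K[X;Y]`. -/
def ygen (K : Type*) [Field K] (r s : ℕ) (i : ℕ) (j : Fin s) : SuperComm K r s :=
  1 ⊗ₜ ExteriorAlgebra.ι K (Pi.single (i, j) 1)

/-- The generic elements `ξ_i = Σ_j u_j ⊗ x_j^{(i)} + Σ_j v_j ⊗ y_j^{(i)} ∈ B ⊗ K[X;Y]`. -/
def xi {K : Type*} [Field K] {B : Type*} [Ring B] [Algebra K B] {r s : ℕ}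
    (u : Fin r → B) (v : Fin s → B) (i : ℕ) : B ⊗[K] SuperComm K r s :=
  (∑ j, u j ⊗ₜ xgen K r s i j) + ∑ j, v j ⊗ₜ ygen K r s i j

/-- The infinite-dimensional Grassmann algebra `G` over `K`. -/
abbrev Grass (K : Type*) [Field K] : Type _ := ExteriorAlgebra K (ℕ → K)

/-- The Grassmann envelope `G(B) = G₀ ⊗ B₀ + G₁ ⊗ B₁ ⊆ G ⊗ B` of a superalgebra `B`
with grading `ℬ : ZMod 2 → Submodule K B`; here `G` carries its natural `ℤ/2`-grading
`G = G₀ ⊕ G₁` by even/odd elements. -/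
def GrassEnv {K : Type*} [Field K] {B : Type*} [Ring B] [Algebra K B]
    (ℬ : ZMod 2 → Submodule K B) : Submodule K (Grass K ⊗[K] B) :=
  Submodule.span K
    {z | ∃ g b, ((g ∈ CliffordAlgebra.evenOdd (0 : QuadraticForm K (ℕ → K)) 0 ∧ b ∈ ℬ 0) ∨
        (g ∈ CliffordAlgebra.evenOdd (0 : QuadraticForm K (ℕ → K)) 1 ∧ b ∈ ℬ 1)) ∧
        z = g ⊗ₜ b}

set_option synthInstance.maxHeartbeats 1000000
set_option maxHeartbeats 1600000

namespace Stmt19Aux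

variable {K : Type*} [Field K] {M : Type*} [AddCommGroup M] [Module K M]

local notation "gi" => CliffordAlgebra.ι (0 : QuadraticForm K M)
local notation "E0" => CliffordAlgebra.evenOdd (0 : QuadraticForm K M) 0
local notation "E1" => CliffordAlgebra.evenOdd (0 : QuadraticForm K M) 1

theorem swap_ι (a b : M) : gi a * gi b = -(gi b * gi a) :=
  eq_neg_of_add_eq_zero_left (ExteriorAlgebra.ι_add_mul_swap a b)

theorem ι_comm_ιι (m m₁ m₂ : M) :
    gi m * (gi m₁ * gi m₂) = (gi m₁ * gi m₂) * gi m := by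
  rw [← mul_assoc, swap_ι m m₁, neg_mul, mul_assoc, swap_ι m m₂, mul_neg, neg_neg, ← mul_assoc]

theorem odd_swap_ι (x : ExteriorAlgebra K M) (hx : x ∈ E1) (m : M) :
    gi m * x = -(x * gi m) := by
  induction x, hx using CliffordAlgebra.odd_induction with
  | ι v => exact swap_ι m v
  | add x y hx hy ihx ihy => rw [mul_add, ihx, ihy, add_mul, neg_add]
  | ι_mul_ι_mul m₁ m₂ y hy ihy =>
    rw [← mul_assoc (gi m), ι_comm_ιι, mul_assoc (gi m₁ * gi m₂), ihy, mul_neg, ← mul_assoc]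

theorem even_comm_ι (x : ExteriorAlgebra K M) (hx : x ∈ E0) (m : M) :
    Commute x (gi m) := by
  induction x, hx using CliffordAlgebra.even_induction with
  | algebraMap r => exact Algebra.commute_algebraMap_left r _
  | add x y hx hy ihx ihy => exact ihx.add_left ihy
  | ι_mul_ι_mul m₁ m₂ y hy ihy =>
    exact Commute.mul_left ((ι_comm_ιι m m₁ m₂).symm) ihy

theorem even_mem_center (x : ExteriorAlgebra K M) (hx : x ∈ E0) :
    x ∈ Subalgebra.center K (ExteriorAlgebra K M) := by
  rw [Subalgebra.mem_center_iff]
  intro y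
  induction y using CliffordAlgebra.induction with
  | algebraMap r => exact Algebra.commutes r x
  | ι m => exact (even_comm_ι x hx m).symm
  | mul a b iha ihb => rw [mul_assoc, ihb, ← mul_assoc, iha, mul_assoc]
  | add a b iha ihb => rw [add_mul, iha, ihb, mul_add]

theorem odd_anticomm (x y : ExteriorAlgebra K M) (hx : x ∈ E1) (hy : y ∈ E1) :
    x * y = -(y * x) := by
  induction x, hx using CliffordAlgebra.odd_induction with
  | ι v => exact odd_swap_ι y hy v
  | add a b ha hb iha ihb => rw [add_mul, iha, ihb, mul_add, neg_add]
  | ι_mul_ι_mul m₁ m₂ a ha iha =>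
    have hc : y * (gi m₁ * gi m₂) = (gi m₁ * gi m₂) * y := by
      have := even_mem_center (gi m₁ * gi m₂)
        (CliffordAlgebra.ι_mul_ι_mem_evenOdd_zero _ m₁ m₂)
      exact (Subalgebra.mem_center_iff.mp this y)
    calc gi m₁ * gi m₂ * a * y = gi m₁ * gi m₂ * (a * y) := by rw [mul_assoc]
      _ = -(gi m₁ * gi m₂ * (y * a)) := by rw [iha, mul_neg]
      _ = -(y * (gi m₁ * gi m₂ * a)) := by rw [← mul_assoc, ← hc, mul_assoc]

theorem odd_sq_zero [CharZero K] (x : ExteriorAlgebra K M) (hx : x ∈ E1) : x * x = 0 := by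
  have h := odd_anticomm x x hx hx
  have h2 : (2 : K) • (x * x) = 0 := by
    rw [two_smul]
    nth_rewrite 1 [h]
    exact neg_add_cancel (x * x)
  rcases smul_eq_zero.mp h2 with h' | h'
  · exact absurd h' (by norm_num)
  · exact h'


section Hom

variable {K : Type*} [Field K] {r s : ℕ}

/-- The even-to-center `AlgHom` on the polynomial part. -/
def evenHom (a : ℕ × Fin r → Grass K) (ha : ∀ p, a p ∈ Subalgebra.center K (Grass K)) :
    MvPolynomial (ℕ × Fin r) K →ₐ[K] Grass K :=
  ((Subalgebra.center K (Grass K)).val).comp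
    (MvPolynomial.aeval fun p => (⟨a p, ha p⟩ : Subalgebra.center K (Grass K)))

theorem evenHom_X (a : ℕ × Fin r → Grass K) (ha : ∀ p, a p ∈ Subalgebra.center K (Grass K))
    (p : ℕ × Fin r) : evenHom a ha (MvPolynomial.X p) = a p := by
  simp [evenHom]

theorem evenHom_mem_center (a : ℕ × Fin r → Grass K)
    (ha : ∀ p, a p ∈ Subalgebra.center K (Grass K)) (x : MvPolynomial (ℕ × Fin r) K) :
    evenHom a ha x ∈ Subalgebra.center K (Grass K) := by
  simp only [evenHom, AlgHom.comp_apply]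
  exact SetLike.coe_mem _

/-- The combined `AlgHom` on the free supercommutative algebra. -/
def psiAux (a : ℕ × Fin r → Grass K) (ha : ∀ p, a p ∈ Subalgebra.center K (Grass K))
    (m : ((ℕ × Fin s) → K) →ₗ[K] Grass K) (hm : ∀ x, m x * m x = 0) :
    SuperComm K r s →ₐ[K] Grass K :=
  Algebra.TensorProduct.lift (evenHom a ha) (ExteriorAlgebra.lift K ⟨m, hm⟩)
    (fun x y => ((Subalgebra.mem_center_iff.mp (evenHom_mem_center a ha x)) _).symm)

theorem psiAux_tmul (a : ℕ × Fin r → Grass K) (ha : ∀ p, a p ∈ Subalgebra.center K (Grass K))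
    (m : ((ℕ × Fin s) → K) →ₗ[K] Grass K) (hm : ∀ x, m x * m x = 0)
    (p : MvPolynomial (ℕ × Fin r) K) (e : ExteriorAlgebra K ((ℕ × Fin s) → K)) :
    psiAux a ha m hm (p ⊗ₜ e) = evenHom a ha p * ExteriorAlgebra.lift K ⟨m, hm⟩ e :=
  Algebra.TensorProduct.lift_tmul _ _ _ _ _

theorem psiAux_xgen (a : ℕ × Fin r → Grass K) (ha : ∀ p, a p ∈ Subalgebra.center K (Grass K))
    (m : ((ℕ × Fin s) → K) →ₗ[K] Grass K) (hm : ∀ x, m x * m x = 0) (i : ℕ) (j : Fin r) :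
    psiAux a ha m hm (xgen K r s i j) = a (i, j) := by
  rw [xgen, psiAux_tmul, map_one, mul_one, evenHom_X]

theorem psiAux_ygen (a : ℕ × Fin r → Grass K) (ha : ∀ p, a p ∈ Subalgebra.center K (Grass K))
    (m : ((ℕ × Fin s) → K) →ₗ[K] Grass K) (hm : ∀ x, m x * m x = 0) (i : ℕ) (j : Fin s) :
    psiAux a ha m hm (ygen K r s i j) = m (Pi.single (i, j) 1) := by
  rw [ygen, psiAux_tmul, map_one, one_mul, ExteriorAlgebra.lift_ι_apply]

variable {B : Type*} [Ring B] [Algebra K B]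

/-- Extend a hom on the supercommutative algebra to `B ⊗ K[X;Y] → G ⊗ B`. -/
def phiAux (Ψ : SuperComm K r s →ₐ[K] Grass K) :
    B ⊗[K] SuperComm K r s →ₐ[K] Grass K ⊗[K] B :=
  ((Algebra.TensorProduct.comm K B (Grass K)).toAlgHom).comp
    (Algebra.TensorProduct.map (AlgHom.id K B) Ψ)

theorem phiAux_tmul (Ψ : SuperComm K r s →ₐ[K] Grass K) (b : B) (x : SuperComm K r s) :
    phiAux Ψ (b ⊗ₜ x) = Ψ x ⊗ₜ b := by
  simp [phiAux]

theorem phiAux_xi (Ψ : SuperComm K r s →ₐ[K] Grass K) (u : Fin r → B) (v : Fin s → B) (i : ℕ) :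
    phiAux Ψ (xi (K := K) u v i) =
      (∑ j, Ψ (xgen K r s i j) ⊗ₜ u j) + ∑ j, Ψ (ygen K r s i j) ⊗ₜ v j := by
  have h1 : ∀ (t : Finset (Fin r)) (g : Fin r → B) (x : Fin r → SuperComm K r s),
      phiAux (B := B) Ψ (∑ j ∈ t, g j ⊗ₜ x j) = ∑ j ∈ t, Ψ (x j) ⊗ₜ g j := by
    intro t g x
    induction t using Finset.induction with
    | empty => simp [map_zero]
    | insert _ _ h ih =>
      rw [Finset.sum_insert h, Finset.sum_insert h, map_add, phiAux_tmul, ih]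
  have h2 : ∀ (t : Finset (Fin s)) (g : Fin s → B) (x : Fin s → SuperComm K r s),
      phiAux (B := B) Ψ (∑ j ∈ t, g j ⊗ₜ x j) = ∑ j ∈ t, Ψ (x j) ⊗ₜ g j := by
    intro t g x
    induction t using Finset.induction with
    | empty => simp [map_zero]
    | insert _ _ h ih =>
      rw [Finset.sum_insert h, Finset.sum_insert h, map_add, phiAux_tmul, ih]
  rw [xi, map_add, h1, h2]

theorem lift_naturality {A A' : Type*} [Semiring A] [Algebra K A] [Semiring A'] [Algebra K A']
    (Φ : A →ₐ[K] A') (ξ : ℕ → A) (f : FreeAlgebra K ℕ) :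
    Φ (FreeAlgebra.lift K ξ f) = FreeAlgebra.lift K (fun i => Φ (ξ i)) f := by
  have h : Φ.comp (FreeAlgebra.lift K ξ) = FreeAlgebra.lift K (fun i => Φ (ξ i)) := by
    apply FreeAlgebra.hom_ext
    funext x
    simp [FreeAlgebra.lift_ι_apply]
  exact DFunLike.congr_fun h f

end Hom

section Stage3

variable {K : Type*} [Field K]

local notation "Ev" => CliffordAlgebra.evenOdd (0 : QuadraticForm K (ℕ → K)) 0
local notation "Od" => CliffordAlgebra.evenOdd (0 : QuadraticForm K (ℕ → K)) 1

theorem single_one_li (s : ℕ) :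
    LinearIndependent K (fun p : ℕ × Fin s => (Pi.single p 1 : (ℕ × Fin s) → K)) := by
  classical
  rw [linearIndependent_iff']
  intro t g hg i hi
  have := congrFun hg i
  simp only [Finset.sum_apply, Pi.smul_apply, Pi.single_apply, smul_eq_mul, mul_ite, mul_one,
    mul_zero, Finset.sum_ite_eq, hi, if_true, Pi.zero_apply] at this
  exact this

theorem exists_odd_linearMap {s : ℕ} (b : ℕ × Fin s → Grass K) (hb : ∀ p, b p ∈ Od) :
    ∃ m : ((ℕ × Fin s) → K) →ₗ[K] Grass K,
      (∀ x, m x ∈ Od) ∧ ∀ p, m (Pi.single p 1) = b p := by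
  classical
  set sing : (ℕ × Fin s) → ((ℕ × Fin s) → K) := fun p => Pi.single p 1 with hsing
  have hli : LinearIndependent K sing := single_one_li s
  have hinj : Function.Injective sing := hli.injective
  have hset : LinearIndepOn K id (Set.range sing) := (linearIndepOn_id_range_iff hinj).mpr hli
  let bas := Module.Basis.extend hset
  let val : hset.extend (Set.subset_univ _) → Grass K := fun x =>
    if h : (x : (ℕ × Fin s) → K) ∈ Set.range sing then b h.choose else 0
  refine ⟨bas.constr K val, ?_, ?_⟩
  · intro x
    rw [Module.Basis.constr_apply, Finsupp.sum]
    refine Submodule.sum_mem _ fun i _ => Submodule.smul_mem _ _ ?_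
    by_cases h : (i : (ℕ × Fin s) → K) ∈ Set.range sing
    · simp only [val, dif_pos h]
      exact hb _
    · simp only [val, dif_neg h]
      exact Submodule.zero_mem _
  · intro p
    have hmem : sing p ∈ hset.extend (Set.subset_univ _) :=
      hset.subset_extend _ ⟨p, rfl⟩
    have h1 : bas.constr K val (bas ⟨sing p, hmem⟩) = val ⟨sing p, hmem⟩ :=
      bas.constr_basis K val _
    rw [Module.Basis.extend_apply_self] at h1
    have hrange : (sing p : (ℕ × Fin s) → K) ∈ Set.range sing := ⟨p, rfl⟩
    have h2 : val ⟨sing p, hmem⟩ = b hrange.choose := dif_pos hrange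
    have h3 : hrange.choose = p := hinj hrange.choose_spec
    rw [h3] at h2
    exact h1.trans h2

theorem grassEnv_decomp {B : Type*} [Ring B] [Algebra K B] (ℬ : ZMod 2 → Submodule K B)
    {r s : ℕ} (u : Fin r → B) (v : Fin s → B)
    (huspan : ∀ b ∈ ℬ 0, b ∈ Submodule.span K (Set.range u))
    (hvspan : ∀ b ∈ ℬ 1, b ∈ Submodule.span K (Set.range v))
    (z : Grass K ⊗[K] B) (hz : z ∈ GrassEnv ℬ) :
    ∃ (α : Fin r → Grass K) (β : Fin s → Grass K),
      (∀ j, α j ∈ Ev) ∧ (∀ j, β j ∈ Od) ∧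
      z = (∑ j, α j ⊗ₜ u j) + ∑ j, β j ⊗ₜ v j := by
  classical
  let T : Submodule K (Grass K ⊗[K] B) :=
  { carrier := {z | ∃ (α : Fin r → Grass K) (β : Fin s → Grass K),
      (∀ j, α j ∈ Ev) ∧ (∀ j, β j ∈ Od) ∧
      z = (∑ j, α j ⊗ₜ u j) + ∑ j, β j ⊗ₜ v j}
    add_mem' := by
      rintro x y ⟨α, β, hα, hβ, rfl⟩ ⟨α', β', hα', hβ', rfl⟩
      refine ⟨α + α', β + β', fun j => Submodule.add_mem _ (hα j) (hα' j),
        fun j => Submodule.add_mem _ (hβ j) (hβ' j), ?_⟩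
      simp only [Pi.add_apply, TensorProduct.add_tmul, Finset.sum_add_distrib]
      abel
    zero_mem' := by
      refine ⟨0, 0, fun j => Submodule.zero_mem _, fun j => Submodule.zero_mem _, ?_⟩
      simp
    smul_mem' := by
      rintro c x ⟨α, β, hα, hβ, rfl⟩
      refine ⟨c • α, c • β, fun j => Submodule.smul_mem _ _ (hα j),
        fun j => Submodule.smul_mem _ _ (hβ j), ?_⟩
      simp only [Pi.smul_apply, TensorProduct.smul_tmul', smul_add, Finset.smul_sum] }
  have hle : GrassEnv ℬ ≤ T := by
    rw [GrassEnv, Submodule.span_le]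
    rintro _ ⟨g, b, hgb, rfl⟩
    rcases hgb with ⟨hg, hbb⟩ | ⟨hg, hbb⟩
    · obtain ⟨c, hc⟩ := (Submodule.mem_span_range_iff_exists_fun K).mp (huspan b hbb)
      refine ⟨fun j => c j • g, 0, fun j => Submodule.smul_mem _ _ hg,
        fun j => Submodule.zero_mem _, ?_⟩
      have : (∑ j, (c j • g) ⊗ₜ[K] u j) = g ⊗ₜ[K] b := by
        rw [← hc, TensorProduct.tmul_sum]
        exact Finset.sum_congr rfl fun j _ => TensorProduct.smul_tmul _ _ _
      simp [this]
    · obtain ⟨c, hc⟩ := (Submodule.mem_span_range_iff_exists_fun K).mp (hvspan b hbb)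
      refine ⟨0, fun j => c j • g, fun j => Submodule.zero_mem _,
        fun j => Submodule.smul_mem _ _ hg, ?_⟩
      have : (∑ j, (c j • g) ⊗ₜ[K] v j) = g ⊗ₜ[K] b := by
        rw [← hc, TensorProduct.tmul_sum]
        exact Finset.sum_congr rfl fun j _ => TensorProduct.smul_tmul _ _ _
      simp [this]
  exact hle hz

theorem key1 [CharZero K] {σ : Type*} {W : Type*} [AddCommGroup W] [Module K W]
    (q : MvPolynomial σ K ⊗[K] W)
    (h : ∀ l : σ → K, LinearMap.rTensor W (MvPolynomial.aeval (R := K) l).toLinearMap q = 0) :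
    q = 0 := by
  classical
  let bb := Module.Basis.ofVectorSpace K W
  let F := (TensorProduct.congr (LinearEquiv.refl K (MvPolynomial σ K)) bb.repr).trans
      (TensorProduct.finsuppScalarRight K K (MvPolynomial σ K) _)
  have claim : ∀ (qq : MvPolynomial σ K ⊗[K] W) (l : σ → K) (t : Module.Basis.ofVectorSpaceIndex K W),
      MvPolynomial.aeval (R := K) l (F qq t) =
        bb.repr ((TensorProduct.lid K W)
          (LinearMap.rTensor W (MvPolynomial.aeval (R := K) l).toLinearMap qq)) t := by
    intro qq l t
    induction qq using TensorProduct.induction_on with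
    | zero => simp
    | tmul p w =>
      simp only [F, LinearEquiv.trans_apply, TensorProduct.congr_tmul, LinearEquiv.refl_apply,
        TensorProduct.finsuppScalarRight_apply_tmul_apply, LinearMap.rTensor_tmul,
        AlgHom.toLinearMap_apply, TensorProduct.lid_tmul, map_smul, Finsupp.smul_apply,
        smul_eq_mul, map_smul]
      ring
    | add x y ihx ihy =>
      simp only [map_add, Finsupp.add_apply, ihx, ihy]
  have hFq : ∀ t, F q t = 0 := by
    intro t
    apply MvPolynomial.funext
    intro l
    have := claim q l t
    rw [h l] at this
    simpa [← RingHom.congr_fun (MvPolynomial.coe_aeval_eq_eval l) (F q t)] using this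
  have : F q = 0 := Finsupp.ext hFq
  simpa using F.map_eq_zero_iff.mp this

end Stage3

section Stage4

variable {K : Type*} [Field K]

/-- Reindexing linear map `((ℕ × Fin s) → K) →ₗ (ℕ → K)` along the encoding of `ℕ × Fin s`. -/
def reindex (s : ℕ) : ((ℕ × Fin s) → K) →ₗ[K] (ℕ → K) where
  toFun f := Function.extend (fun p : ℕ × Fin s => Encodable.encode p) f 0
  map_add' f g := by
    classical
    funext n
    simp only [Function.extend_def, Pi.add_apply]
    split <;> simp
  map_smul' c f := by
    classical
    funext n
    simp only [Function.extend_def, Pi.smul_apply, RingHom.id_apply]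
    split <;> simp

theorem reindex_single (s : ℕ) (p : ℕ × Fin s) :
    reindex (K := K) s (Pi.single p 1) = Pi.single (Encodable.encode p) 1 := by
  classical
  have hinj : Function.Injective (fun p : ℕ × Fin s => Encodable.encode p) :=
    fun a b h => Encodable.encode_injective h
  funext n
  by_cases h : ∃ q : ℕ × Fin s, Encodable.encode q = n
  · obtain ⟨q, rfl⟩ := h
    rw [show (Encodable.encode q) = (fun p : ℕ × Fin s => Encodable.encode p) q from rfl]
    rw [reindex]
    simp only [LinearMap.coe_mk, AddHom.coe_mk]
    rw [hinj.extend_apply]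
    simp [Pi.single_apply, hinj.eq_iff]
  · rw [reindex]
    simp only [LinearMap.coe_mk, AddHom.coe_mk]
    rw [Function.extend_apply' _ _ _ h]
    have hne : n ≠ Encodable.encode p := fun hh => h ⟨p, hh.symm⟩
    simp [Pi.single_apply, hne]

theorem reindex_injective (s : ℕ) : Function.Injective (reindex (K := K) s) := by
  classical
  have hinj : Function.Injective (fun p : ℕ × Fin s => Encodable.encode p) :=
    fun a b h => Encodable.encode_injective h
  intro x y hxy
  funext p
  have := congrFun hxy (Encodable.encode p)
  rw [reindex] at this
  simp only [LinearMap.coe_mk, AddHom.coe_mk] at this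
  rwa [hinj.extend_apply x 0 p, hinj.extend_apply y 0 p] at this

theorem map_reindex_injective (s : ℕ) :
    Function.Injective (ExteriorAlgebra.map (reindex (K := K) s)) := by
  classical
  have hinj : Function.Injective (fun p : ℕ × Fin s => Encodable.encode p) :=
    fun a b h => Encodable.encode_injective h
  have hleft : (LinearMap.funLeft K K (fun p : ℕ × Fin s => Encodable.encode p)).comp
      (reindex (K := K) s) = LinearMap.id := by
    apply LinearMap.ext
    intro x
    funext p
    simp only [LinearMap.comp_apply, LinearMap.funLeft_apply, LinearMap.id_apply, reindex,
      LinearMap.coe_mk, AddHom.coe_mk]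
    exact hinj.extend_apply x 0 p
  have hcomp : (ExteriorAlgebra.map
        (LinearMap.funLeft K K (fun p : ℕ × Fin s => Encodable.encode p))).comp
      (ExteriorAlgebra.map (reindex (K := K) s)) = AlgHom.id K _ := by
    rw [ExteriorAlgebra.map_comp_map, hleft, ExteriorAlgebra.map_id]
  intro x y hxy
  have := congrArg (ExteriorAlgebra.map
    (LinearMap.funLeft K K (fun p : ℕ × Fin s => Encodable.encode p))) hxy
  rwa [← AlgHom.comp_apply, ← AlgHom.comp_apply, hcomp, AlgHom.id_apply, AlgHom.id_apply] at this

end Stage4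

section Stage5

variable {K : Type*} [Field K] [CharZero K] {r s : ℕ}

/-- Scalar (hence central, even) values for the even variables. -/
def scalA (r : ℕ) (l : ℕ × Fin r → K) : ℕ × Fin r → Grass K :=
  fun p => algebraMap K (Grass K) (l p)

theorem scalA_central (l : ℕ × Fin r → K) :
    ∀ p, scalA r l p ∈ Subalgebra.center K (Grass K) := fun _ =>
  Subalgebra.algebraMap_mem _ _

/-- Odd values: images of the canonical generators. -/
def oddM (s : ℕ) : ((ℕ × Fin s) → K) →ₗ[K] Grass K :=
  (ExteriorAlgebra.ι K).comp (reindex (K := K) s)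

theorem oddM_sq (x : (ℕ × Fin s) → K) : oddM (K := K) s x * oddM (K := K) s x = 0 :=
  ExteriorAlgebra.ι_sq_zero _

theorem oddM_odd (x : (ℕ × Fin s) → K) :
    oddM (K := K) s x ∈ CliffordAlgebra.evenOdd (0 : QuadraticForm K (ℕ → K)) 1 :=
  CliffordAlgebra.ι_mem_evenOdd_one _ _

/-- The scalar specialization homomorphism. -/
def psiL (r s : ℕ) (l : ℕ × Fin r → K) : SuperComm K r s →ₐ[K] Grass K :=
  psiAux (scalA r l) (scalA_central l) (oddM s) oddM_sq

/-- The "coefficient extraction" linear map. -/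
def mu (r s : ℕ) (l : ℕ × Fin r → K) :
    SuperComm K r s →ₗ[K] ExteriorAlgebra K ((ℕ × Fin s) → K) :=
  (TensorProduct.lid K _).toLinearMap ∘ₗ
    LinearMap.rTensor _ (MvPolynomial.aeval (R := K) l).toLinearMap

theorem lift_oddM_eq_map :
    ExteriorAlgebra.lift K ⟨oddM (K := K) s, oddM_sq⟩ =
      ExteriorAlgebra.map (reindex (K := K) s) := by
  apply CliffordAlgebra.hom_ext
  apply LinearMap.ext
  intro x
  simp only [LinearMap.comp_apply, AlgHom.toLinearMap_apply]
  rw [ExteriorAlgebra.lift_ι_apply, ExteriorAlgebra.map_apply_ι]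
  rfl

theorem evenHom_scalA (l : ℕ × Fin r → K) (p : MvPolynomial (ℕ × Fin r) K) :
    evenHom (scalA r l) (scalA_central l) p =
      algebraMap K (Grass K) (MvPolynomial.aeval (R := K) l p) := by
  have h1 : (fun p : ℕ × Fin r =>
        (⟨scalA r l p, scalA_central l p⟩ : Subalgebra.center K (Grass K))) =
      fun p => Algebra.ofId K (Subalgebra.center K (Grass K)) (l p) :=
    funext fun p => Subtype.ext rfl
  rw [evenHom, AlgHom.comp_apply, h1]
  have h2 : (MvPolynomial.aeval fun p : ℕ × Fin r =>
        Algebra.ofId K (Subalgebra.center K (Grass K)) (l p)) p =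
      (Algebra.ofId K (Subalgebra.center K (Grass K))) (MvPolynomial.aeval (R := K) l p) := by
    rw [← MvPolynomial.comp_aeval]
    rfl
  rw [h2]
  rfl

theorem psiL_eq (l : ℕ × Fin r → K) :
    (psiL (K := K) r s l).toLinearMap =
      (ExteriorAlgebra.map (reindex (K := K) s)).toLinearMap ∘ₗ mu (K := K) r s l := by
  apply TensorProduct.ext'
  intro p e
  simp only [AlgHom.toLinearMap_apply, LinearMap.comp_apply]
  rw [psiL, psiAux_tmul, lift_oddM_eq_map, evenHom_scalA]
  simp only [mu, LinearMap.comp_apply, LinearMap.rTensor_tmul, AlgHom.toLinearMap_apply,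
    LinearEquiv.coe_coe, TensorProduct.lid_tmul, map_smul]
  rw [Algebra.smul_def]

variable {B : Type*} [Ring B] [Algebra K B]

theorem psi_kill (z : B ⊗[K] SuperComm K r s)
    (hz : ∀ l : ℕ × Fin r → K, phiAux (B := B) (psiL (K := K) r s l) z = 0) : z = 0 := by
  have h1 : ∀ l, (Algebra.TensorProduct.map (AlgHom.id K B) (psiL (K := K) r s l)) z = 0 := by
    intro l
    have h := hz l
    rw [phiAux, AlgHom.comp_apply] at h
    apply (Algebra.TensorProduct.comm K B (Grass K)).injective
    simpa using h
  have h2 : ∀ l, LinearMap.lTensor B (psiL (K := K) r s l).toLinearMap z = 0 := by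
    intro l
    have hmap : (Algebra.TensorProduct.map (AlgHom.id K B) (psiL (K := K) r s l)).toLinearMap
        = LinearMap.lTensor B (psiL (K := K) r s l).toLinearMap := by
      apply TensorProduct.ext'
      intro b x
      simp
    have := h1 l
    rw [← AlgHom.toLinearMap_apply, hmap] at this
    exact this
  have h3 : ∀ l, LinearMap.lTensor B (mu (K := K) r s l) z = 0 := by
    intro l
    have := h2 l
    rw [psiL_eq, LinearMap.lTensor_comp, LinearMap.comp_apply] at this
    have hinj : Function.Injective
        (LinearMap.lTensor B (ExteriorAlgebra.map (reindex (K := K) s)).toLinearMap) :=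
      Module.Flat.lTensor_preserves_injective_linearMap _
        (fun a b h => map_reindex_injective s h)
    apply hinj
    simpa using this
  set q := TensorProduct.leftComm K B (MvPolynomial (ℕ × Fin r) K)
      (ExteriorAlgebra K ((ℕ × Fin s) → K)) z with hqdef
  have h4 : ∀ l : ℕ × Fin r → K,
      LinearMap.rTensor (B ⊗[K] ExteriorAlgebra K ((ℕ × Fin s) → K))
        (MvPolynomial.aeval (R := K) l).toLinearMap q = 0 := by
    intro l
    have hdiag : (TensorProduct.lid K (B ⊗[K] ExteriorAlgebra K ((ℕ × Fin s) → K))).toLinearMap ∘ₗ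
        LinearMap.rTensor (B ⊗[K] ExteriorAlgebra K ((ℕ × Fin s) → K))
          (MvPolynomial.aeval (R := K) l).toLinearMap ∘ₗ
        (TensorProduct.leftComm K B (MvPolynomial (ℕ × Fin r) K)
          (ExteriorAlgebra K ((ℕ × Fin s) → K))).toLinearMap
        = LinearMap.lTensor B (mu (K := K) r s l) := by
      apply TensorProduct.ext'
      intro b t
      induction t using TensorProduct.induction_on with
      | zero => simp
      | tmul p e =>
        simp only [LinearMap.comp_apply, LinearEquiv.coe_coe, TensorProduct.leftComm_tmul,
          LinearMap.rTensor_tmul, AlgHom.toLinearMap_apply, TensorProduct.lid_tmul,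
          LinearMap.lTensor_tmul, mu, TensorProduct.tmul_smul]
      | add x y ihx ihy =>
        have hx : (b ⊗ₜ[K] (x + y) : B ⊗[K] SuperComm K r s) = b ⊗ₜ x + b ⊗ₜ y :=
          TensorProduct.tmul_add _ _ _
        rw [hx, map_add, map_add, ihx, ihy]
    have hcf := LinearMap.congr_fun hdiag z
    simp only [LinearMap.comp_apply, LinearEquiv.coe_coe] at hcf
    apply (TensorProduct.lid K (B ⊗[K] ExteriorAlgebra K ((ℕ × Fin s) → K))).injective
    rw [map_zero, hqdef]
    exact hcf.trans (h3 l)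
  have h5 : q = 0 := key1 q h4
  apply (TensorProduct.leftComm K B (MvPolynomial (ℕ × Fin r) K)
      (ExteriorAlgebra K ((ℕ × Fin s) → K))).injective
  rw [map_zero, ← hqdef]
  exact h5

end Stage5

end Stmt19Aux

/-- Let `B = B₀ ⊕ B₁` be a finite-dimensional superalgebra over a field `K` of
characteristic zero, with bases `u₁,…,u_r` of `B₀` and `v₁,…,v_s` of `B₁`.  The kernel of
the homomorphism `K⟨t₁,t₂,…⟩ → B ⊗ K[X;Y]`, `t_i ↦ ξ_i`, equals the T-ideal `T(G(B))` of
polynomial identities of the Grassmann envelope `G(B) = G₀ ⊗ B₀ + G₁ ⊗ B₁`; that is, the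
subalgebra generated by the generic elements `ξ_i` is isomorphic to the relatively free
algebra `F(G(B))` of the variety generated by `G(B)`. -/
theorem stmt19 {K : Type*} [Field K] [CharZero K]
    {B : Type*} [Ring B] [Algebra K B] [FiniteDimensional K B]
    (ℬ : ZMod 2 → Submodule K B) [GradedAlgebra ℬ]
    {r s : ℕ} (u : Fin r → B) (v : Fin s → B)
    (hu0 : ∀ j, u j ∈ ℬ 0) (hv1 : ∀ j, v j ∈ ℬ 1)
    (huind : LinearIndependent K u) (hvind : LinearIndependent K v)
    (huspan : ∀ b ∈ ℬ 0, b ∈ Submodule.span K (Set.range u))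
    (hvspan : ∀ b ∈ ℬ 1, b ∈ Submodule.span K (Set.range v))
    (f : FreeAlgebra K ℕ) :
    FreeAlgebra.lift K (xi (K := K) u v) f = 0 ↔
      (∀ w : ℕ → Grass K ⊗[K] B, (∀ i, w i ∈ GrassEnv ℬ) →
        FreeAlgebra.lift K w f = 0) := by
  classical
  constructor
  · intro h0 w hw
    choose α β hα hβ hzw using fun i =>
      Stmt19Aux.grassEnv_decomp ℬ u v huspan hvspan (w i) (hw i)
    have ha : ∀ p : ℕ × Fin r, (fun p : ℕ × Fin r => α p.1 p.2) p ∈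
        Subalgebra.center K (Grass K) := fun p =>
      Stmt19Aux.even_mem_center _ (hα p.1 p.2)
    obtain ⟨m, hmOd, hmval⟩ := Stmt19Aux.exists_odd_linearMap (K := K)
      (fun p : ℕ × Fin s => β p.1 p.2) (fun p => hβ p.1 p.2)
    have hmsq : ∀ x, m x * m x = 0 := fun x => Stmt19Aux.odd_sq_zero _ (hmOd x)
    set Ψ := Stmt19Aux.psiAux (fun p : ℕ × Fin r => α p.1 p.2) ha m hmsq with hΨ
    set Φ := Stmt19Aux.phiAux (B := B) Ψ with hΦ
    have hΦξ : ∀ i, Φ (xi (K := K) u v i) = w i := by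
      intro i
      rw [hΦ, Stmt19Aux.phiAux_xi, hzw i]
      congr 1
      · exact Finset.sum_congr rfl fun j _ => by rw [hΨ, Stmt19Aux.psiAux_xgen]
      · exact Finset.sum_congr rfl fun j _ => by rw [hΨ, Stmt19Aux.psiAux_ygen, hmval]
    have hnat := Stmt19Aux.lift_naturality (K := K) Φ (xi (K := K) u v) f
    rw [h0, map_zero] at hnat
    have hwq : w = fun i => Φ (xi (K := K) u v i) := funext fun i => (hΦξ i).symm
    rw [hwq]
    exact hnat.symm
  · intro H
    apply Stmt19Aux.psi_kill (K := K) (B := B)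
    intro l
    set Φ := Stmt19Aux.phiAux (B := B) (Stmt19Aux.psiL (K := K) r s l) with hΦ
    have hwmem : ∀ i, Φ (xi (K := K) u v i) ∈ GrassEnv ℬ := by
      intro i
      rw [hΦ, Stmt19Aux.phiAux_xi]
      refine Submodule.add_mem _ (Submodule.sum_mem _ fun j _ => ?_)
        (Submodule.sum_mem _ fun j _ => ?_)
      · refine Submodule.subset_span ⟨_, _, Or.inl ⟨?_, hu0 j⟩, rfl⟩
        rw [Stmt19Aux.psiL, Stmt19Aux.psiAux_xgen]
        exact SetLike.algebraMap_mem_graded _ _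
      · refine Submodule.subset_span ⟨_, _, Or.inr ⟨?_, hv1 j⟩, rfl⟩
        rw [Stmt19Aux.psiL, Stmt19Aux.psiAux_ygen]
        exact Stmt19Aux.oddM_odd _
    have hz0 := H (fun i => Φ (xi (K := K) u v i)) hwmem
    rw [← Stmt19Aux.lift_naturality (K := K) Φ (xi (K := K) u v) f] at hz0
    exact hz0
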